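/- arXiv:1702.08108 — 4 statements merged into one kernel-verified Lean document; each statement's English description precedes it below -/
import Mathlib

section
/- Let j ∈ ℤ and g ∈ ℂ[X], and let A := W(j, g(X + j/2)) be the operator realization of tʲ·g(D + j/2) on ℂ[t,t⁻¹] (so A(tᵐ) = g(m + j/2)·tᵐ⁺ʲ). Then σ(A) = −A if and only if g satisfies the parity condition g(−X) = (−1)^{j+1}·g(X) as polynomials; in particular, tʲ·g(D + j/2) is fixed by −σ exactly when j is odd and g is even, or j is even and g is odd. (This is the paper's explicit description of the Lie algebra 𝒟⁻ of elements fixed by −σ.) -/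
open Polynomial LaurentPolynomial

/-- The operator realization of the anti-involution `σ` determined by `σ(t) = −t`,
`σ(D) = −D`: on `tᵏ·f(D)` (realized as `W(k,f)`) it is `σ(k,f) = (−1)ᵏ·W(k, f(−X−k))`. -/
noncomputable def sigmaOp
    (W : ℤ → ℂ[X] → Module.End ℂ (LaurentPolynomial ℂ)) (k : ℤ) (f : ℂ[X]) :
    Module.End ℂ (LaurentPolynomial ℂ) :=
  ((-1 : ℂ) ^ k) • W k (f.comp (-Polynomial.X - Polynomial.C (k : ℂ)))

lemma end_ext' {F G : Module.End ℂ (LaurentPolynomial ℂ)}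
    (h : ∀ m : ℤ, F (T m) = G (T m)) : F = G := by
  apply AddMonoidAlgebra.lhom_ext'
  intro a; refine LinearMap.ext fun b => ?_
  show F (AddMonoidAlgebra.single a b) = G (AddMonoidAlgebra.single a b)
  have hb : (AddMonoidAlgebra.single a b : LaurentPolynomial ℂ) = b • T a := by
    rw [T, AddMonoidAlgebra.smul_single, smul_eq_mul, mul_one]
  rw [hb, map_smul, map_smul]
  exact congrArg (b • ·) (h a)

/-- for `A := W(j, g(X + j/2))` (realizing `tʲ·g(D + j/2)`), one has
`σ(A) = −A` if and only if `g(−X) = (−1)^{j+1}·g(X)`. -/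
theorem sigmaOp_fixed_iff_parity
    (W : ℤ → ℂ[X] → Module.End ℂ (LaurentPolynomial ℂ))
    (hW : ∀ (k : ℤ) (f : ℂ[X]) (m : ℤ),
      W k f (T m) = f.eval (m : ℂ) • (T (m + k) : LaurentPolynomial ℂ))
    (j : ℤ) (g : ℂ[X]) :
    sigmaOp W j (g.comp (Polynomial.X + Polynomial.C ((j : ℂ) / 2))) =
        -(W j (g.comp (Polynomial.X + Polynomial.C ((j : ℂ) / 2)))) ↔
      g.comp (-Polynomial.X) = ((-1 : ℂ) ^ (j + 1)) • g := by
  have hne : (-1 : ℂ) ≠ 0 := by norm_num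
  have hsq : ((-1 : ℂ) ^ j) * ((-1 : ℂ) ^ j) = 1 := by
    rw [← zpow_add₀ hne]
    exact Even.neg_one_zpow ⟨j, rfl⟩
  have key : ∀ m : ℤ, (sigmaOp W j (g.comp (Polynomial.X + Polynomial.C ((j : ℂ) / 2)))) (T m)
      = ((-1:ℂ)^j * g.eval (-((m:ℂ) + j/2))) • T (m + j) := by
    intro m
    simp only [sigmaOp, LinearMap.smul_apply, hW, eval_comp, eval_add, eval_sub, eval_neg,
      eval_X, eval_C, smul_smul]
    ring_nf
  have key2 : ∀ m : ℤ, (-(W j (g.comp (Polynomial.X + Polynomial.C ((j : ℂ) / 2))))) (T m)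
      = (-(g.eval ((m:ℂ) + j/2))) • T (m + j) := by
    intro m
    simp only [LinearMap.neg_apply, hW, eval_comp, eval_add, eval_X, eval_C, neg_smul]
  constructor
  · intro h
    have hsc : ∀ m : ℤ, (-1:ℂ)^j * g.eval (-((m:ℂ) + j/2)) = -(g.eval ((m:ℂ) + j/2)) := by
      intro m
      have h1 := congrArg (fun F : Module.End ℂ (LaurentPolynomial ℂ) => F (T m)) h
      simp only [key, key2] at h1
      have hT : (T (m+j) : LaurentPolynomial ℂ) ≠ 0 :=
        fun h0 => one_ne_zero (AddMonoidAlgebra.single_eq_zero.mp (by unfold T at h0; exact h0))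
      have h2 := sub_eq_zero.mpr h1
      rw [← sub_smul] at h2
      rcases smul_eq_zero.mp h2 with h' | h'
      · exact sub_eq_zero.mp h'
      · exact absurd h' hT
    apply Polynomial.eq_of_infinite_eval_eq
    apply Set.Infinite.mono (s := (fun m : ℤ => (m:ℂ) + j/2) '' Set.univ)
    · rintro x ⟨m, -, rfl⟩
      simp only [Set.mem_setOf_eq, eval_comp, eval_neg, eval_X, eval_smul, smul_eq_mul]
      rw [zpow_add_one₀ hne]
      linear_combination ((-1:ℂ)^j) * (hsc m) - (g.eval (-((m:ℂ) + j/2))) * hsq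
    · apply Set.Infinite.image
      · intro a _ b _ hab
        have : (a : ℂ) = b := add_right_cancel hab
        exact_mod_cast this
      · exact Set.infinite_univ
  · intro h
    apply end_ext'
    intro m
    rw [key, key2]
    congr 1
    have h1 := congrArg (fun p => Polynomial.eval ((m:ℂ) + j/2) p) h
    simp only [eval_comp, eval_neg, eval_X, eval_smul, smul_eq_mul] at h1
    rw [h1, zpow_add_one₀ hne]
    linear_combination (-(g.eval ((m:ℂ) + j/2))) * hsq
end

section
/- For all integers r, s and all polynomials f, g ∈ ℂ[X], define h ∈ ℂ[X] by h(Y) = f(Y + s/2)·g(Y − r/2) − f(Y − s/2)·g(Y + r/2). Then: (i) the commutator of the operators tʳ·f(D + r/2) and tˢ·g(D + s/2) on ℂ[t,t⁻¹] equals t^{r+s}·h(D + (r+s)/2), i.e. [W(r, f(X + r/2)), W(s, g(X + s/2))] = W(r+s, h(X + (r+s)/2)); and (ii) if f(−X) = (−1)^{r+1}·f(X) and g(−X) = (−1)^{s+1}·g(X), then h(−Y) = (−1)^{r+s+1}·h(Y). Consequently the span 𝒟⁻ of the operators tʲ·g(D + j/2) with g(−X) = (−1)^{j+1}·g(X) is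 closed under commutators, i.e. 𝒟⁻ is a Lie subalgebra of the endomorphism algebra of ℂ[t,t⁻¹]. -/
open Polynomial LaurentPolynomial

/-- The polynomial `h(Y) = f(Y + s/2)·g(Y − r/2) − f(Y − s/2)·g(Y + r/2)`. -/
noncomputable def hPoly (r s : ℤ) (f g : ℂ[X]) : ℂ[X] :=
  f.comp (Polynomial.X + Polynomial.C ((s : ℂ) / 2)) *
      g.comp (Polynomial.X - Polynomial.C ((r : ℂ) / 2)) -
    f.comp (Polynomial.X - Polynomial.C ((s : ℂ) / 2)) *
      g.comp (Polynomial.X + Polynomial.C ((r : ℂ) / 2))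

/-- The span `𝒟⁻` of the operators `tʲ·g(D + j/2)` with `g(−X) = (−1)^{j+1}·g(X)`. -/
noncomputable def Dminus
    (W : ℤ → ℂ[X] → Module.End ℂ (LaurentPolynomial ℂ)) :
    Submodule ℂ (Module.End ℂ (LaurentPolynomial ℂ)) :=
  Submodule.span ℂ
    {A | ∃ (j : ℤ) (g : ℂ[X]),
      g.comp (-Polynomial.X) = ((-1 : ℂ) ^ (j + 1)) • g ∧
      A = W j (g.comp (Polynomial.X + Polynomial.C ((j : ℂ) / 2)))}

lemma part1_aux (W : ℤ → ℂ[X] → Module.End ℂ (LaurentPolynomial ℂ))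
    (hW : ∀ (k : ℤ) (f : ℂ[X]) (m : ℤ),
      W k f (T m) = f.eval (m : ℂ) • (T (m + k) : LaurentPolynomial ℂ))
    (r s : ℤ) (f g : ℂ[X]) :
      ⁅W r (f.comp (Polynomial.X + Polynomial.C ((r : ℂ) / 2))),
          W s (g.comp (Polynomial.X + Polynomial.C ((s : ℂ) / 2)))⁆ =
        W (r + s)
          ((hPoly r s f g).comp
            (Polynomial.X + Polynomial.C (((r + s : ℤ) : ℂ) / 2))) := by
  apply LinearMap.ext
  intro p
  induction p using LaurentPolynomial.induction_on' with
  | add p q hp hq => simp only [map_add, hp, hq]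
  | C_mul_T n a =>
    have hsm : ∀ x : LaurentPolynomial ℂ,
        LaurentPolynomial.C a * x = a • x := by
      intro x; rw [LaurentPolynomial.C_eq_algebraMap, ← Algebra.smul_def]
    rw [hsm, map_smul, map_smul]
    congr 1
    have e1 : n + s + r = n + (r + s) := by ring
    have e2 : n + r + s = n + (r + s) := by ring
    simp only [Ring.lie_def, LinearMap.sub_apply, Module.End.mul_apply, hW, map_smul,
      smul_smul, e1, e2]
    rw [← sub_smul]
    congr 1
    simp only [hPoly, eval_comp, eval_add, eval_sub, eval_mul, eval_X, eval_C]
    push_cast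
    ring

lemma part2_aux (r s : ℤ) (f g : ℂ[X])
    (hf : f.comp (-Polynomial.X) = ((-1 : ℂ) ^ (r + 1)) • f)
    (hg : g.comp (-Polynomial.X) = ((-1 : ℂ) ^ (s + 1)) • g) :
    (hPoly r s f g).comp (-Polynomial.X) =
      ((-1 : ℂ) ^ (r + s + 1)) • hPoly r s f g := by
  have key : ∀ (p : ℂ[X]) (ε a : ℂ), p.comp (-Polynomial.X) = ε • p →
      (p.comp (Polynomial.X + Polynomial.C a)).comp (-Polynomial.X) =
        ε • p.comp (Polynomial.X - Polynomial.C a) := by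
    intro p ε a hp
    rw [Polynomial.comp_assoc]
    have h1 : (Polynomial.X + Polynomial.C a).comp (-Polynomial.X)
        = (-Polynomial.X : ℂ[X]).comp (Polynomial.X - Polynomial.C a) := by
      simp [sub_comp]; ring
    rw [h1, ← Polynomial.comp_assoc, hp, Polynomial.smul_comp]
  have key' : ∀ (p : ℂ[X]) (ε a : ℂ), p.comp (-Polynomial.X) = ε • p →
      (p.comp (Polynomial.X - Polynomial.C a)).comp (-Polynomial.X) =
        ε • p.comp (Polynomial.X + Polynomial.C a) := by
    intro p ε a hp
    have := key p ε (-a) hp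
    simpa [map_neg, sub_neg_eq_add, sub_eq_add_neg] using this
  have hneg : (-1:ℂ) ≠ 0 := by norm_num
  have hε : (-1:ℂ)^(r+1) * (-1:ℂ)^(s+1) = -(-1:ℂ)^(r+s+1) := by
    rw [← zpow_add₀ hneg]
    have e : r + 1 + (s+1) = (r+s+1) + 1 := by ring
    rw [e, zpow_add₀ hneg, zpow_one]; ring
  simp only [hPoly, sub_comp, mul_comp,
    key f _ _ hf, key' f _ _ hf, key g _ _ hg, key' g _ _ hg]
  rw [smul_mul_smul_comm, smul_mul_smul_comm, hε]
  module

lemma part3_aux (W : ℤ → ℂ[X] → Module.End ℂ (LaurentPolynomial ℂ))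
    (hW : ∀ (k : ℤ) (f : ℂ[X]) (m : ℤ),
      W k f (T m) = f.eval (m : ℂ) • (T (m + k) : LaurentPolynomial ℂ)) :
    ∀ A ∈ Dminus W, ∀ B ∈ Dminus W, ⁅A, B⁆ ∈ Dminus W := by
  intro A hA
  induction hA using Submodule.span_induction with
  | mem x hx =>
    intro B hB
    induction hB using Submodule.span_induction with
    | mem y hy =>
      obtain ⟨r, f, hf, rfl⟩ := hx
      obtain ⟨s, g, hg, rfl⟩ := hy
      rw [part1_aux W hW r s f g]
      exact Submodule.subset_span ⟨r + s, hPoly r s f g, part2_aux r s f g hf hg, rfl⟩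
    | zero => rw [Ring.lie_def, mul_zero, zero_mul, sub_zero]; exact Submodule.zero_mem _
    | add y z _ _ hy hz => rw [Ring.lie_def, mul_add, add_mul, add_sub_add_comm, ← Ring.lie_def, ← Ring.lie_def]; exact Submodule.add_mem _ hy hz
    | smul c y _ hy => rw [Ring.lie_def, mul_smul_comm, smul_mul_assoc, ← smul_sub, ← Ring.lie_def]; exact Submodule.smul_mem _ _ hy
  | zero => intro B _; rw [Ring.lie_def, mul_zero, zero_mul, sub_zero]; exact Submodule.zero_mem _
  | add x y _ _ hx hy => intro B hB; rw [Ring.lie_def, mul_add, add_mul, add_sub_add_comm, ← Ring.lie_def, ← Ring.lie_def]; exact Submodule.add_mem _ (hx B hB) (hy B hB)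
  | smul c x _ hx => intro B hB; rw [Ring.lie_def, mul_smul_comm, smul_mul_assoc, ← smul_sub, ← Ring.lie_def]; exact Submodule.smul_mem _ _ (hx B hB)

/-- with `h(Y) = f(Y + s/2)·g(Y − r/2) − f(Y − s/2)·g(Y + r/2)`:
(i) `[tʳ·f(D + r/2), tˢ·g(D + s/2)] = t^{r+s}·h(D + (r+s)/2)`;
(ii) if `f(−X) = (−1)^{r+1}·f(X)` and `g(−X) = (−1)^{s+1}·g(X)` then
`h(−Y) = (−1)^{r+s+1}·h(Y)`; consequently `𝒟⁻` is closed under commutators. -/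
theorem Dminus_lie_closed
    (W : ℤ → ℂ[X] → Module.End ℂ (LaurentPolynomial ℂ))
    (hW : ∀ (k : ℤ) (f : ℂ[X]) (m : ℤ),
      W k f (T m) = f.eval (m : ℂ) • (T (m + k) : LaurentPolynomial ℂ)) :
    (∀ (r s : ℤ) (f g : ℂ[X]),
      ⁅W r (f.comp (Polynomial.X + Polynomial.C ((r : ℂ) / 2))),
          W s (g.comp (Polynomial.X + Polynomial.C ((s : ℂ) / 2)))⁆ =
        W (r + s)
          ((hPoly r s f g).comp
            (Polynomial.X + Polynomial.C (((r + s : ℤ) : ℂ) / 2)))) ∧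
    (∀ (r s : ℤ) (f g : ℂ[X]),
      f.comp (-Polynomial.X) = ((-1 : ℂ) ^ (r + 1)) • f →
      g.comp (-Polynomial.X) = ((-1 : ℂ) ^ (s + 1)) • g →
      (hPoly r s f g).comp (-Polynomial.X) =
        ((-1 : ℂ) ^ (r + s + 1)) • hPoly r s f g) ∧
    (∀ A ∈ Dminus W, ∀ B ∈ Dminus W, ⁅A, B⁆ ∈ Dminus W) :=
  ⟨part1_aux W hW, part2_aux, part3_aux W hW⟩
end

section
/- For every integer a and every natural number b, there exists a polynomial p ∈ ℂ[X] of degree strictly less than 2b such that the operator t^{2a+1}·(D^{2b} + p(D)) on ℂ[t,t⁻¹] belongs to the Lie subalgebra L of the ℂ-endomorphism algebra of ℂ[t,t⁻¹] generated (under commutator) by the four operators t, D³, t²(D+1) and t⁻²(D−1). (This is the generation, up to lower-order terms, of the elements w_{2a+1,2b} of W⁻ in the proof of Lemma 2.4.) -/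
section helpers
open Polynomial
attribute [local instance 100] LieRing.ofAssociativeRing


lemma WB_le_pred {d : WithBot ℕ} {n : ℕ} (h : d < (n : WithBot ℕ)) :
    d ≤ ((n - 1 : ℕ) : WithBot ℕ) := by
  cases d with
  | bot => exact bot_le
  | coe m =>
    have : m < n := WithBot.coe_lt_coe.mp h
    exact WithBot.coe_le_coe.mpr (Nat.le_pred_of_lt this)

lemma wb_lt_add_le {a b : WithBot ℕ} {m n : ℕ} (ha : a < (m : WithBot ℕ))
    (hb : b ≤ (n : WithBot ℕ)) : a + b < ((m + n : ℕ) : WithBot ℕ) := by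
  cases a with
  | bot => simpa [WithBot.bot_add] using WithBot.bot_lt_coe (m + n)
  | coe i =>
    cases b with
    | bot => simpa [WithBot.add_bot] using WithBot.bot_lt_coe (m + n)
    | coe j =>
      rw [Nat.cast_withBot] at ha hb ⊢
      have h1 : i < m := WithBot.coe_lt_coe.mp ha
      have h2 : j ≤ n := WithBot.coe_le_coe.mp hb
      rw [← WithBot.coe_add, WithBot.coe_lt_coe]
      omega

lemma wb_le_add_lt {a b : WithBot ℕ} {m n : ℕ} (ha : a ≤ (m : WithBot ℕ))
    (hb : b < (n : WithBot ℕ)) : a + b < ((m + n : ℕ) : WithBot ℕ) := by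
  rw [add_comm a b, Nat.add_comm m n]
  exact wb_lt_add_le hb ha

lemma deg_C_mul_le (a : ℂ) (p : ℂ[X]) : (C a * p).degree ≤ p.degree := by
  rw [← smul_eq_C_mul]
  exact degree_smul_le a p


lemma comp_sub_deg (s : ℂ[X]) (c : ℂ) {n : ℕ} (hs : s.degree ≤ (n : WithBot ℕ)) :
    (s.comp (X + C c) - s).degree < (n : WithBot ℕ) := by
  rcases eq_or_ne s 0 with rfl | h0
  · simp only [zero_comp, sub_zero, degree_zero]
    exact WithBot.bot_lt_coe n
  rcases Nat.eq_zero_or_pos s.natDegree with hd | hd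
  · obtain ⟨a, rfl⟩ := natDegree_eq_zero.mp hd
    simp only [C_comp, sub_self, degree_zero]
    exact WithBot.bot_lt_coe n
  · have hlc : (s.comp (X + C c)).leadingCoeff = s.leadingCoeff := by
      rw [leadingCoeff_comp (by simp)]
      simp [(monic_X_add_C c).leadingCoeff]
    have hcomp0 : s.comp (X + C c) ≠ 0 := by
      intro h
      apply h0
      simpa [h, leadingCoeff_eq_zero] using hlc.symm
    have hdeg : (s.comp (X + C c)).degree = s.degree := by
      rw [degree_eq_natDegree hcomp0, degree_eq_natDegree h0, natDegree_comp]
      simp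
    calc (s.comp (X + C c) - s).degree < (s.comp (X + C c)).degree :=
          degree_sub_lt hdeg hcomp0 hlc
      _ = s.degree := hdeg
      _ ≤ n := hs

lemma aux1 (n : ℕ) (hn : 1 ≤ n) (c d : ℂ) (hc : c ≠ 0) :
    (C (c * n) * X ^ n - ((X + C c) ^ n - X ^ n) * (X + C d)).degree < (n : WithBot ℕ) := by
  have hn' : (n : ℂ) ≠ 0 := Nat.cast_ne_zero.mpr (by omega)
  have hcn : (c * n : ℂ) ≠ 0 := mul_ne_zero hc hn'
  set r : ℂ[X] := (X + C c) ^ n - X ^ n with hr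
  have hrc : r.coeff (n - 1) = c * n := by
    rw [hr, coeff_sub, coeff_X_add_C_pow, coeff_X_pow]
    have h1 : n - (n - 1) = 1 := by omega
    have h2 : n - 1 ≠ n := by omega
    have h3 : n.choose (n - 1) = n := by
      rw [Nat.choose_symm hn, Nat.choose_one_right]
    simp [h1, h2, h3]
  have hdegpow : ((X + C c) ^ n : ℂ[X]).degree = (n : WithBot ℕ) := by
    simp [degree_pow, degree_X_add_C]
  have hrdlt : r.degree < (n : WithBot ℕ) := by
    have h := degree_sub_lt (q := X ^ n) (by rw [hdegpow, degree_X_pow])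
      (((monic_X_add_C c).pow n).ne_zero)
      (by rw [((monic_X_add_C c).pow n).leadingCoeff, (monic_X_pow n).leadingCoeff])
    rwa [hdegpow] at h
  have hrdeg : r.degree = ((n - 1 : ℕ) : WithBot ℕ) :=
    le_antisymm (WB_le_pred hrdlt) (le_degree_of_ne_zero (by rw [hrc]; exact hcn))
  have hrlc : r.leadingCoeff = c * n := by
    rw [leadingCoeff, natDegree_eq_of_degree_eq_some hrdeg, hrc]
  have hmul_deg : (r * (X + C d)).degree = (n : WithBot ℕ) := by
    rw [degree_mul, hrdeg, degree_X_add_C]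
    norm_cast
    omega
  have hlhs_deg : (C (c * n) * X ^ n : ℂ[X]).degree = (n : WithBot ℕ) :=
    degree_C_mul_X_pow n hcn
  have hlhs0 : (C (c * n) * X ^ n : ℂ[X]) ≠ 0 := by
    intro h
    rw [h, degree_zero] at hlhs_deg
    exact (WithBot.bot_ne_coe) hlhs_deg
  have hlc2 : (C (c * n) * X ^ n : ℂ[X]).leadingCoeff = (r * (X + C d)).leadingCoeff := by
    rw [leadingCoeff_mul, leadingCoeff_mul, hrlc, (monic_X_add_C d).leadingCoeff,
      leadingCoeff_C, (monic_X_pow n).leadingCoeff]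
  have h := degree_sub_lt (hlhs_deg.trans hmul_deg.symm) hlhs0 hlc2
  rwa [hlhs_deg] at h


lemma endo_ext (A B : Module.End ℂ (LaurentPolynomial ℂ))
    (h : ∀ m : ℤ, A (LaurentPolynomial.T m) = B (LaurentPolynomial.T m)) : A = B := by
  apply LinearMap.ext; intro f
  induction f using LaurentPolynomial.induction_on' with
  | add p q hp hq => rw [map_add, map_add, hp, hq]
  | C_mul_T n a =>
    have e : (LaurentPolynomial.C a * LaurentPolynomial.T n : LaurentPolynomial ℂ)
        = a • LaurentPolynomial.T n := by
      rw [Algebra.smul_def]; rfl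
    rw [e, map_smul, map_smul, h n]

section
variable (W : ℤ → ℂ[X] → Module.End ℂ (LaurentPolynomial ℂ))
  (hW : ∀ (k : ℤ) (f : ℂ[X]) (m : ℤ),
      W k f (LaurentPolynomial.T m) = f.eval (m : ℂ) • (LaurentPolynomial.T (m + k) : LaurentPolynomial ℂ))

include hW

lemma W_add (k : ℤ) (f g : ℂ[X]) : W k (f + g) = W k f + W k g := by
  apply endo_ext; intro m
  simp [hW, add_smul]

lemma W_smul (k : ℤ) (c : ℂ) (f : ℂ[X]) : W k (Polynomial.C c * f) = c • W k f := by
  apply endo_ext; intro m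
  simp [hW, mul_smul]

lemma W_bracket (k l : ℤ) (f g : ℂ[X]) :
    ⁅W k f, W l g⁆ =
      W (k + l) (f.comp (X + Polynomial.C (l:ℂ)) * g - g.comp (X + Polynomial.C (k:ℂ)) * f) := by
  apply endo_ext; intro m
  rw [LieRing.of_associative_ring_bracket]
  simp only [LinearMap.sub_apply, Module.End.mul_apply, hW, map_smul, smul_smul,
    eval_sub, eval_mul, eval_comp, eval_add, eval_X, eval_C, sub_smul]
  rw [add_right_comm m l k]
  push_cast
  ring_nf

lemma crux (n : ℕ) (k c d : ℂ) (hc : c ≠ 0) (p : ℂ[X]) (hp : p.degree < (n : WithBot ℕ)) :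
    ((X + Polynomial.C (k + d)) * (X ^ n + p)
      - (X ^ n + p).comp (X + Polynomial.C c) * (X + Polynomial.C d)
      - Polynomial.C (k - c * n) * X ^ n).degree < (n : WithBot ℕ) := by
  have hE : (X + Polynomial.C (k + d)) * (X ^ n + p)
      - (X ^ n + p).comp (X + Polynomial.C c) * (X + Polynomial.C d)
      - Polynomial.C (k - c * n) * X ^ n
      = Polynomial.C k * p - (p.comp (X + Polynomial.C c) - p) * (X + Polynomial.C d)
        + (Polynomial.C (c * n) * X ^ n
           - ((X + Polynomial.C c) ^ n - X ^ n) * (X + Polynomial.C d)) := by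
    rw [add_comp, X_pow_comp, map_add, map_sub, map_mul]
    ring
  rw [hE]
  rcases Nat.eq_zero_or_pos n with rfl | hn
  · have hp0 : p = 0 := by
      rw [← degree_eq_bot]
      simpa using hp
    subst hp0
    simp
  · have h1 : (Polynomial.C k * p).degree < (n : WithBot ℕ) :=
      lt_of_le_of_lt (deg_C_mul_le k p) hp
    have h2 : ((p.comp (X + Polynomial.C c) - p) * (X + Polynomial.C d)).degree
        < (n : WithBot ℕ) := by
      have hd2 : (p.comp (X + Polynomial.C c) - p).degree < ((n - 1 : ℕ) : WithBot ℕ) :=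
        comp_sub_deg p c (WB_le_pred hp)
      have hb : (X + Polynomial.C d).degree ≤ ((1:ℕ) : WithBot ℕ) := by
        rw [degree_X_add_C]; exact_mod_cast le_refl _
      have := wb_lt_add_le hd2 hb
      rw [show n - 1 + 1 = n by omega] at this
      exact lt_of_le_of_lt (degree_mul_le _ _) this
    have h3 := aux1 n hn c d hc
    refine lt_of_le_of_lt (degree_add_le _ _) (max_lt ?_ h3)
    exact lt_of_le_of_lt (degree_sub_le _ _) (max_lt h1 h2)

lemma W_sub (k : ℤ) (f g : ℂ[X]) : W k (f - g) = W k f - W k g := by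
  apply endo_ext; intro m
  simp [hW, sub_smul]

lemma peel (K : LieSubalgebra ℂ (Module.End ℂ (LaurentPolynomial ℂ)))
    (k' : ℤ) (n : ℕ) (g : ℂ[X]) (e : ℂ) (he : e ≠ 0)
    (hdeg : (g - Polynomial.C e * X ^ n).degree < (n : WithBot ℕ)) (hmem : W k' g ∈ K) :
    ∃ p' : ℂ[X], p'.degree < (n : WithBot ℕ) ∧ W k' (X ^ n + p') ∈ K := by
  refine ⟨Polynomial.C e⁻¹ * (g - Polynomial.C e * X ^ n),
    lt_of_le_of_lt (deg_C_mul_le _ _) hdeg, ?_⟩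
  have hx : X ^ n + Polynomial.C e⁻¹ * (g - Polynomial.C e * X ^ n)
      = Polynomial.C e⁻¹ * g := by
    rw [mul_sub, ← mul_assoc, ← C_mul, inv_mul_cancel₀ he, C_1, one_mul]
    ring
  rw [hx, W_smul W hW]
  exact K.smul_mem _ hmem

lemma step (K : LieSubalgebra ℂ (Module.End ℂ (LaurentPolynomial ℂ)))
    (s : ℤ) (d : ℂ) (hs : s ≠ 0)
    (hg : W s (X + Polynomial.C d) ∈ K) (k : ℤ) (n : ℕ) (he : k ≠ s * n)
    (p : ℂ[X]) (hp : p.degree < (n : WithBot ℕ)) (hmem : W k (X ^ n + p) ∈ K) :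
    ∃ p' : ℂ[X], p'.degree < (n : WithBot ℕ) ∧ W (k + s) (X ^ n + p') ∈ K := by
  set c : ℂ := (s : ℂ) with hc
  have hc0 : c ≠ 0 := by
    simpa [hc] using (Int.cast_ne_zero (α := ℂ)).mpr hs
  set g : ℂ[X] := (X + Polynomial.C ((k : ℂ) + d)) * (X ^ n + p)
      - (X ^ n + p).comp (X + Polynomial.C c) * (X + Polynomial.C d) with hg'
  have key : ⁅W s (X + Polynomial.C d), W k (X ^ n + p)⁆ = W (k + s) g := by
    rw [W_bracket W hW]
    congr 1
    · omega
    · rw [hg', add_comp, X_comp, C_comp, map_add]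
      ring
  have hb : W (k + s) g ∈ K := key ▸ K.lie_mem hg hmem
  have heC : ((k : ℂ) - c * n) ≠ 0 := by
    rw [hc, sub_ne_zero]
    intro h
    apply he
    exact_mod_cast h
  refine peel W hW K (k + s) n g ((k : ℂ) - c * n) heC ?_ hb
  have := crux W hW n (k : ℂ) c d hc0 p hp
  rw [hg']
  exact this

lemma raise (K : LieSubalgebra ℂ (Module.End ℂ (LaurentPolynomial ℂ)))
    (hg2 : W 0 (X ^ 3) ∈ K) (n : ℕ) (p : ℂ[X]) (hp : p.degree < (n : WithBot ℕ))
    (hmem : W 1 (X ^ n + p) ∈ K) :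
    ∃ p' : ℂ[X], p'.degree < ((n + 2 : ℕ) : WithBot ℕ) ∧ W 1 (X ^ (n + 2) + p') ∈ K := by
  set g : ℂ[X] := ((X + Polynomial.C (1 : ℂ)) ^ 3 - X ^ 3) * (X ^ n + p) with hg'
  have key : ⁅W 0 (X ^ 3), W 1 (X ^ n + p)⁆ = W 1 g := by
    rw [W_bracket W hW]
    congr 1
    rw [hg', X_pow_comp]
    push_cast
    simp only [map_zero, add_zero, comp_X]
    ring
  have hb : W 1 g ∈ K := key ▸ K.lie_mem hg2 hmem
  refine peel W hW K 1 (n + 2) g 3 (by norm_num) ?_ hb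
  have hC1 : Polynomial.C (1 : ℂ) = 1 := C_1
  have hC3 : Polynomial.C (3 : ℂ) = 3 := map_ofNat Polynomial.C 3
  have hsplit : g - Polynomial.C (3 : ℂ) * X ^ (n + 2)
      = ((X + Polynomial.C (1 : ℂ)) ^ 3 - X ^ 3) * p
        + (Polynomial.C (3 : ℂ) * X ^ (n + 1) + X ^ n) := by
    rw [hg', hC1, hC3]
    ring
  rw [hsplit]
  have hsdeg : ((X + Polynomial.C (1 : ℂ)) ^ 3 - X ^ 3).degree ≤ ((2 : ℕ) : WithBot ℕ) := by
    have : ((X + Polynomial.C (1 : ℂ)) ^ 3 - X ^ 3)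
        = Polynomial.C 3 * X ^ 2 + Polynomial.C 3 * X + Polynomial.C 1 := by
      rw [hC1, hC3]; ring
    rw [this]
    compute_degree
    exact_mod_cast le_refl (2 : ℕ)
  have h1 : (((X + Polynomial.C (1 : ℂ)) ^ 3 - X ^ 3) * p).degree
      < ((n + 2 : ℕ) : WithBot ℕ) := by
    have := wb_le_add_lt hsdeg hp
    rw [show 2 + n = n + 2 by omega] at this
    exact lt_of_le_of_lt (degree_mul_le _ _) this
  have h2 : (Polynomial.C (3 : ℂ) * X ^ (n + 1) + X ^ n).degree
      < ((n + 2 : ℕ) : WithBot ℕ) := by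
    refine lt_of_le_of_lt (degree_add_le _ _) (max_lt ?_ ?_)
    · refine lt_of_le_of_lt (deg_C_mul_le _ _) ?_
      rw [degree_X_pow]
      exact_mod_cast (show n + 1 < n + 2 by omega)
    · rw [degree_X_pow]
      exact_mod_cast (show n < n + 2 by omega)
  exact lt_of_le_of_lt (degree_add_le _ _) (max_lt h1 h2)

lemma base (K : LieSubalgebra ℂ (Module.End ℂ (LaurentPolynomial ℂ)))
    (hg1 : W 1 1 ∈ K) (hg2 : W 0 (X ^ 3) ∈ K) (b : ℕ) :
    ∃ p' : ℂ[X], p'.degree < ((2 * b : ℕ) : WithBot ℕ) ∧ W 1 (X ^ (2 * b) + p') ∈ K := by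
  induction b with
  | zero =>
    refine ⟨0, by simpa using WithBot.bot_lt_coe 0, ?_⟩
    simpa using hg1
  | succ b ih =>
    obtain ⟨p, hd, hm⟩ := ih
    obtain ⟨p', hd', hm'⟩ := raise W hW K hg2 (2 * b) p hd hm
    refine ⟨p', ?_, ?_⟩
    · rwa [show 2 * b + 2 = 2 * (b + 1) by omega] at hd'
    · rwa [show 2 * b + 2 = 2 * (b + 1) by omega] at hm'

end

end helpers

open Polynomial LaurentPolynomial

attribute [local instance 100] LieRing.ofAssociativeRing

/-- for every integer `a` and natural number `b`, there exists a
polynomial `p ∈ ℂ[X]` of degree `< 2b` such that the operator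
`t^{2a+1}·(D^{2b} + p(D))` (realized as `W(2a+1, X^{2b} + p)`) belongs to the Lie
subalgebra generated by `t`, `D³`, `t²(D+1)` and `t⁻²(D−1)`.  Here `W(k,f)` is
determined by `W(k,f)(tᵐ) = f(m)·tᵐ⁺ᵏ`, and `w_{k,ℓ} = W(k,Xˡ)`. -/
theorem w_odd_even_mem_lieSpan_up_to_lower_terms
    (W : ℤ → ℂ[X] → Module.End ℂ (LaurentPolynomial ℂ))
    (hW : ∀ (k : ℤ) (f : ℂ[X]) (m : ℤ),
      W k f (T m) = f.eval (m : ℂ) • (T (m + k) : LaurentPolynomial ℂ))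
    (a : ℤ) (b : ℕ) :
    ∃ p : ℂ[X], p.degree < ((2 * b : ℕ) : WithBot ℕ) ∧
      W (2 * a + 1) (Polynomial.X ^ (2 * b) + p) ∈
        LieSubalgebra.lieSpan ℂ (Module.End ℂ (LaurentPolynomial ℂ))
          {W 1 1, W 0 (Polynomial.X ^ 3),
            W 2 Polynomial.X + W 2 1, W (-2) Polynomial.X - W (-2) 1} := by
  set K := LieSubalgebra.lieSpan ℂ (Module.End ℂ (LaurentPolynomial ℂ))
    {W 1 1, W 0 (Polynomial.X ^ 3),
      W 2 Polynomial.X + W 2 1, W (-2) Polynomial.X - W (-2) 1} with hK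
  have hg1 : W 1 1 ∈ K := LieSubalgebra.subset_lieSpan (Set.mem_insert _ _)
  have hg2 : W 0 (X ^ 3) ∈ K :=
    LieSubalgebra.subset_lieSpan (Set.mem_insert_of_mem _ (Set.mem_insert _ _))
  have hg3 : W 2 (X + Polynomial.C 1) ∈ K := by
    rw [Polynomial.C_1, W_add W hW]
    exact LieSubalgebra.subset_lieSpan
      (Set.mem_insert_of_mem _ (Set.mem_insert_of_mem _ (Set.mem_insert _ _)))
  have hg4 : W (-2) (X + Polynomial.C (-1 : ℂ)) ∈ K := by
    have hx : (X + Polynomial.C (-1 : ℂ)) = X - 1 := by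
      rw [map_neg, Polynomial.C_1]; ring
    rw [hx, W_sub W hW]
    exact LieSubalgebra.subset_lieSpan
      (Set.mem_insert_of_mem _ (Set.mem_insert_of_mem _ (Set.mem_insert_of_mem _ rfl)))
  induction a using Int.induction_on with
  | zero =>
    have := base W hW K hg1 hg2 b
    simpa using this
  | succ i ih =>
    obtain ⟨p, hd, hm⟩ := ih
    obtain ⟨p', hd', hm'⟩ := step W hW K 2 1 (by norm_num) hg3 (2 * (i : ℤ) + 1) (2 * b)
      (by omega) p hd hm
    exact ⟨p', hd', by rwa [show (2 * ((i : ℤ) + 1) + 1 : ℤ) = 2 * (i : ℤ) + 1 + 2 by ring]⟩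
  | pred i ih =>
    obtain ⟨p, hd, hm⟩ := ih
    obtain ⟨p', hd', hm'⟩ := step W hW K (-2) (-1) (by norm_num) hg4 (2 * (-(i : ℤ)) + 1) (2 * b)
      (by omega) p hd hm
    exact ⟨p', hd', by rwa [show (2 * (-(i : ℤ) - 1) + 1 : ℤ) = 2 * (-(i : ℤ)) + 1 + -2 by ring]⟩
end

section
/- For every integer a and every natural number b, there exists a polynomial p ∈ ℂ[X] of degree strictly less than 2b+1 such that the operator t^{2a}·(D^{2b+1} + p(D)) on ℂ[t,t⁻¹] belongs to the Lie subalgebra L of the ℂ-endomorphism algebra of ℂ[t,t⁻¹] generated (under commutator) by the four operators t, D³, t²(D+1) and t⁻²(D−1). (This is the generation, up to lower-order terms, of the elements w_{2a,2b+1} of W⁻ in the proof of Lemma 2.4; the case a = 0 gives the elements w_{0,2b+1} up to lower terms.) -/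
open Polynomial LaurentPolynomial

attribute [local instance 100] LieRing.ofAssociativeRing

namespace WStmt13

lemma end_ext {A B : Module.End ℂ (LaurentPolynomial ℂ)}
    (h : ∀ m : ℤ, A (T m) = B (T m)) : A = B := by
  apply LinearMap.ext; intro p
  induction p using LaurentPolynomial.induction_on' with
  | add p q hp hq => rw [map_add, map_add, hp, hq]
  | C_mul_T a b =>
    have hs : (LaurentPolynomial.C b : LaurentPolynomial ℂ) * T a = b • T a := by
      rw [Algebra.smul_def]; rfl
    rw [hs, map_smul, map_smul]; exact congrArg (b • ·) (h a)

lemma nextCoeff_comp_X_add_C (f : ℂ[X]) (r : ℂ) (hf : f.Monic) :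
    (f.comp (X + Polynomial.C r)).nextCoeff = f.nextCoeff + r * f.natDegree := by
  rcases Nat.eq_zero_or_pos f.natDegree with h0 | hpos
  · have hf1 : f = 1 := hf.natDegree_eq_zero.mp h0
    simp [hf1, nextCoeff]
  · have hdc : (f.comp (X + Polynomial.C r)).natDegree = f.natDegree := by
      rw [← taylor_apply, natDegree_taylor]
    rw [nextCoeff_of_natDegree_pos (by rw [hdc]; exact hpos),
      nextCoeff_of_natDegree_pos hpos, hdc, ← taylor_apply, taylor_coeff]
    set p := f.natDegree with hp
    have hdeg : (hasseDeriv (p - 1) f).degree ≤ 1 := by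
      have := natDegree_le_iff_degree_le.mp
        (le_trans (natDegree_hasseDeriv_le f (p - 1)) (show p - (p - 1) ≤ 1 by omega))
      exact_mod_cast this
    have hc0 : (hasseDeriv (p - 1) f).coeff 0 = f.coeff (p - 1) := by
      rw [hasseDeriv_coeff, zero_add, Nat.choose_self]; ring
    have hc1 : (hasseDeriv (p - 1) f).coeff 1 = (p : ℂ) := by
      rw [hasseDeriv_coeff]
      have h1 : 1 + (p - 1) = p := by omega
      rw [h1]
      have h2 : p.choose (p - 1) = p := by
        rw [Nat.choose_symm hpos, Nat.choose_one_right]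
      rw [h2, show f.coeff p = 1 from hf.coeff_natDegree]
      simp
    rw [eq_X_add_C_of_degree_le_one hdeg]
    simp [hc0, hc1]
    ring

lemma br_lead (k l : ℤ) (f g : ℂ[X]) (hf : f.Monic) (hg : g.Monic)
    (n : ℕ) (hn : f.natDegree + g.natDegree = n + 1)
    (hc : ((l : ℂ) * f.natDegree - (k : ℂ) * g.natDegree) ≠ 0) :
    (f.comp (X + Polynomial.C (l : ℂ)) * g
        - g.comp (X + Polynomial.C (k : ℂ)) * f).natDegree = n ∧
    (f.comp (X + Polynomial.C (l : ℂ)) * g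
        - g.comp (X + Polynomial.C (k : ℂ)) * f).leadingCoeff
      = (l : ℂ) * f.natDegree - (k : ℂ) * g.natDegree := by
  set F := f.comp (X + Polynomial.C (l : ℂ)) with hF
  set G := g.comp (X + Polynomial.C (k : ℂ)) with hG
  have hFm : F.Monic := hf.comp_X_add_C _
  have hGm : G.Monic := hg.comp_X_add_C _
  have hFd : F.natDegree = f.natDegree := by rw [hF, ← taylor_apply, natDegree_taylor]
  have hGd : G.natDegree = g.natDegree := by rw [hG, ← taylor_apply, natDegree_taylor]
  have hum : (F * g).Monic := hFm.mul hg
  have hvm : (G * f).Monic := hGm.mul hf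
  have hud : (F * g).natDegree = n + 1 := by
    rw [hFm.natDegree_mul hg, hFd, hn]
  have hvd : (G * f).natDegree = n + 1 := by
    rw [hGm.natDegree_mul hf, hGd]; omega
  have hcoeff : (F * g - G * f).coeff n = (l : ℂ) * f.natDegree - (k : ℂ) * g.natDegree := by
    have h1 : (F * g).coeff n = (F * g).nextCoeff := by
      rw [nextCoeff_of_natDegree_pos (by omega), hud]; norm_num
    have h2 : (G * f).coeff n = (G * f).nextCoeff := by
      rw [nextCoeff_of_natDegree_pos (by omega), hvd]; norm_num
    rw [coeff_sub, h1, h2, hFm.nextCoeff_mul hg, hGm.nextCoeff_mul hf,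
      hF, hG, nextCoeff_comp_X_add_C f _ hf, nextCoeff_comp_X_add_C g _ hg]
    ring
  have hne : (F * g - G * f) ≠ 0 := fun h0 => hc (by rw [← hcoeff, h0, coeff_zero])
  have hdlt : (F * g - G * f).degree < ((n + 1 : ℕ) : WithBot ℕ) := by
    have h3 : (F * g).degree = (G * f).degree := by
      rw [degree_eq_natDegree hum.ne_zero, degree_eq_natDegree hvm.ne_zero, hud, hvd]
    have := degree_sub_lt h3 hum.ne_zero (by rw [hum.leadingCoeff, hvm.leadingCoeff])
    rwa [degree_eq_natDegree hum.ne_zero, hud] at this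
  have hnlt : (F * g - G * f).natDegree < n + 1 := (natDegree_lt_iff_degree_lt hne).mpr hdlt
  have hnge : n ≤ (F * g - G * f).natDegree :=
    le_natDegree_of_ne_zero (by rw [hcoeff]; exact hc)
  have hnd : (F * g - G * f).natDegree = n := by omega
  exact ⟨hnd, by rw [leadingCoeff, hnd, hcoeff]⟩

/-- the Lie subalgebra generated by the four operators -/
noncomputable def S (W : ℤ → ℂ[X] → Module.End ℂ (LaurentPolynomial ℂ)) :
    LieSubalgebra ℂ (Module.End ℂ (LaurentPolynomial ℂ)) :=
  LieSubalgebra.lieSpan ℂ (Module.End ℂ (LaurentPolynomial ℂ))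
    {W 1 1, W 0 (Polynomial.X ^ 3),
      W 2 Polynomial.X + W 2 1, W (-2) Polynomial.X - W (-2) 1}

/-- `Good W k d`: some monic polynomial of degree `d`, shifted by `k`, lies in `S W`. -/
def Good (W : ℤ → ℂ[X] → Module.End ℂ (LaurentPolynomial ℂ)) (k : ℤ) (d : ℕ) : Prop :=
  ∃ f : ℂ[X], f.Monic ∧ f.natDegree = d ∧ W k f ∈ S W

section
variable {W : ℤ → ℂ[X] → Module.End ℂ (LaurentPolynomial ℂ)}
  (hW : ∀ (k : ℤ) (f : ℂ[X]) (m : ℤ),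
      W k f (T m) = f.eval (m : ℂ) • (T (m + k) : LaurentPolynomial ℂ))
include hW

lemma W_add (k : ℤ) (f g : ℂ[X]) : W k (f + g) = W k f + W k g := by
  apply end_ext; intro m
  simp [hW, add_smul]

lemma W_sub (k : ℤ) (f g : ℂ[X]) : W k (f - g) = W k f - W k g := by
  apply end_ext; intro m
  simp [hW, sub_smul]

lemma W_smul (k : ℤ) (c : ℂ) (f : ℂ[X]) : W k (c • f) = c • W k f := by
  apply end_ext; intro m
  simp [hW, smul_smul]

lemma W_bracket (k l : ℤ) (f g : ℂ[X]) :
    ⁅W k f, W l g⁆ =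
      W (k + l) (f.comp (X + Polynomial.C (l : ℂ)) * g
        - g.comp (X + Polynomial.C (k : ℂ)) * f) := by
  apply end_ext; intro m
  rw [Ring.lie_def]
  simp only [LinearMap.sub_apply, Module.End.mul_apply, hW, map_smul, smul_smul,
    eval_sub, eval_mul, eval_comp, eval_add, eval_X, eval_C]
  rw [sub_smul]
  push_cast
  ring_nf

/-- scaling a member of `S` to make it monic -/
lemma Good.of_mem (k : ℤ) (h : ℂ[X]) (d : ℕ) (hd : h.natDegree = d)
    (hlc : h.leadingCoeff ≠ 0) (hmem : W k h ∈ S W) : Good W k d := by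
  refine ⟨h.leadingCoeff⁻¹ • h, ?_, ?_, ?_⟩
  · rw [Polynomial.smul_eq_C_mul]
    unfold Polynomial.Monic
    rw [leadingCoeff_mul, leadingCoeff_C, inv_mul_cancel₀ hlc]
  · rw [Polynomial.smul_eq_C_mul, natDegree_C_mul (inv_ne_zero hlc), hd]
  · rw [W_smul hW]
    exact (S W).smul_mem _ hmem

/-- the key step: the bracket of two good elements is good -/
lemma Good.step {k l : ℤ} {p q d : ℕ} (hpq : p + q = d + 1)
    (hc : ((l : ℂ) * p - (k : ℂ) * q) ≠ 0)
    (h1 : Good W k p) (h2 : Good W l q) : Good W (k + l) d := by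
  obtain ⟨f, hfm, hfd, hfS⟩ := h1
  obtain ⟨g, hgm, hgd, hgS⟩ := h2
  have hc' : ((l : ℂ) * f.natDegree - (k : ℂ) * g.natDegree) ≠ 0 := by
    rw [hfd, hgd]; exact hc
  obtain ⟨hnd, hlc⟩ := br_lead k l f g hfm hgm d (by rw [hfd, hgd]; exact hpq) hc'
  refine Good.of_mem hW _ _ _ hnd (by rw [hlc]; exact hc') ?_
  rw [← W_bracket hW]
  exact (S W).lie_mem hfS hgS

omit hW in
lemma good_X3 : Good W 0 3 :=
  ⟨X ^ 3, monic_X_pow 3, natDegree_X_pow 3,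
    LieSubalgebra.subset_lieSpan (by simp)⟩

omit hW in
lemma good_t : Good W 1 0 :=
  ⟨1, monic_one, natDegree_one,
    LieSubalgebra.subset_lieSpan (by simp)⟩

lemma goodA : ∀ b : ℕ, Good W 2 (2 * b + 1)
  | 0 => by
    refine ⟨X + Polynomial.C 1, monic_X_add_C 1, natDegree_X_add_C 1, ?_⟩
    have h1 : W 2 (X + Polynomial.C 1) = W 2 Polynomial.X + W 2 1 := by
      rw [W_add hW, Polynomial.C_1]
    rw [h1]
    exact LieSubalgebra.subset_lieSpan (by simp)
  | (b + 1) => by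
    have h := Good.step hW (k := 0) (l := 2) (p := 3) (q := 2 * b + 1)
      (d := 2 * (b + 1) + 1) (by ring) (by push_cast; norm_num) (good_X3) (goodA b)
    have h02 : (0 + 2 : ℤ) = 2 := by norm_num
    rwa [h02] at h

lemma good_u : Good W (-1) 0 := by
  have hgen4 : W (-2) (X - Polynomial.C 1) ∈ S W := by
    have h1 : W (-2) (X - Polynomial.C 1) = W (-2) Polynomial.X - W (-2) 1 := by
      rw [W_sub hW, Polynomial.C_1]
    rw [h1]
    exact LieSubalgebra.subset_lieSpan (by simp)
  have hbr := W_bracket hW 1 (-2) 1 (X - Polynomial.C 1)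
  have hpoly : (1 : ℂ[X]).comp (X + Polynomial.C ((-2 : ℤ) : ℂ)) * (X - Polynomial.C 1)
      - (X - Polynomial.C 1 : ℂ[X]).comp (X + Polynomial.C ((1 : ℤ) : ℂ)) * 1
      = ((-1 : ℂ) • (1 : ℂ[X])) := by
    simp only [Polynomial.one_comp, Polynomial.sub_comp, Polynomial.X_comp,
      Polynomial.C_comp, one_mul, mul_one, Polynomial.smul_eq_C_mul, map_neg,
      Polynomial.C_1]
    ring_nf
    simp [Polynomial.C_1]
  rw [hpoly] at hbr
  have hmem : W (1 + -2) ((-1 : ℂ) • (1 : ℂ[X])) ∈ S W := by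
    rw [← hbr]
    exact (S W).lie_mem (LieSubalgebra.subset_lieSpan (by simp)) hgen4
  refine ⟨1, monic_one, natDegree_one, ?_⟩
  have h2 : W (-1) (1 : ℂ[X]) = (-1 : ℂ) • W (1 + -2) ((-1 : ℂ) • (1 : ℂ[X])) := by
    rw [W_smul hW, smul_smul]
    norm_num
  rw [h2]
  exact (S W).smul_mem _ hmem

lemma Good.up {l : ℤ} {d : ℕ} (h : Good W l (d + 1)) : Good W (l + 1) d := by
  have hc : ((1 : ℤ) : ℂ) * ((d + 1 : ℕ) : ℂ) - (l : ℂ) * ((0 : ℕ) : ℂ) ≠ 0 := by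
    push_cast
    simpa using Nat.cast_add_one_ne_zero (R := ℂ) d
  exact Good.step hW (k := l) (l := 1) (p := d + 1) (q := 0) (d := d) (by ring) hc h good_t

lemma Good.down {l : ℤ} {d : ℕ} (h : Good W l (d + 1)) : Good W (l - 1) d := by
  have hc : ((-1 : ℤ) : ℂ) * ((d + 1 : ℕ) : ℂ) - (l : ℂ) * ((0 : ℕ) : ℂ) ≠ 0 := by
    have h1 : ((d : ℂ) + 1) ≠ 0 := Nat.cast_add_one_ne_zero d
    push_cast
    intro h2
    exact h1 (by linear_combination -h2)
  have h3 := Good.step hW (k := l) (l := -1) (p := d + 1) (q := 0) (d := d)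
    (by ring) hc h (good_u hW)
  rwa [show l + -1 = l - 1 by ring] at h3

lemma good_upIter (n : ℕ) : ∀ (d : ℕ) (l : ℤ), Good W l (d + n) → Good W (l + n) d := by
  induction n with
  | zero => intro d l h; simpa using h
  | succ n ih =>
    intro d l h
    have h1 : Good W l ((d + 1) + n) := by rwa [show (d + 1) + n = d + (n + 1) by omega]
    have h2 := Good.up hW (ih (d + 1) l h1)
    rwa [show l + (↑(n + 1) : ℤ) = l + n + 1 by push_cast; ring]

lemma good_downIter (n : ℕ) : ∀ (d : ℕ) (l : ℤ), Good W l (d + n) → Good W (l - n) d := by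
  induction n with
  | zero => intro d l h; simpa using h
  | succ n ih =>
    intro d l h
    have h1 : Good W l ((d + 1) + n) := by rwa [show (d + 1) + n = d + (n + 1) by omega]
    have h2 := Good.down hW (ih (d + 1) l h1)
    rwa [show l - (↑(n + 1) : ℤ) = l - n - 1 by push_cast; ring]

lemma good_main (a : ℤ) (b : ℕ) : Good W (2 * a) (2 * b + 1) := by
  rcases le_or_gt 1 a with ha | ha
  · -- a ≥ 1, go up from shift 2
    set n : ℕ := (a - 1).toNat with hn
    have hna : (n : ℤ) = a - 1 := Int.toNat_of_nonneg (by omega)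
    have h0 : Good W 2 ((2 * b + 1) + 2 * n) := by
      have := goodA hW (b + n)
      rwa [show 2 * (b + n) + 1 = (2 * b + 1) + 2 * n by ring] at this
    have h1 := good_upIter hW (2 * n) (2 * b + 1) 2 h0
    rwa [show (2 : ℤ) + (↑(2 * n) : ℤ) = 2 * a by push_cast; omega] at h1
  · -- a ≤ 0, go down from shift 2
    set n : ℕ := (1 - a).toNat with hn
    have hna : (n : ℤ) = 1 - a := Int.toNat_of_nonneg (by omega)
    have h0 : Good W 2 ((2 * b + 1) + 2 * n) := by
      have := goodA hW (b + n)
      rwa [show 2 * (b + n) + 1 = (2 * b + 1) + 2 * n by ring] at this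
    have h1 := good_downIter hW (2 * n) (2 * b + 1) 2 h0
    rwa [show (2 : ℤ) - (↑(2 * n) : ℤ) = 2 * a by push_cast; omega] at h1

end
end WStmt13

theorem w_even_odd_mem_lieSpan_up_to_lower_terms
    (W : ℤ → ℂ[X] → Module.End ℂ (LaurentPolynomial ℂ))
    (hW : ∀ (k : ℤ) (f : ℂ[X]) (m : ℤ),
      W k f (T m) = f.eval (m : ℂ) • (T (m + k) : LaurentPolynomial ℂ))
    (a : ℤ) (b : ℕ) :
    ∃ p : ℂ[X], p.degree < ((2 * b + 1 : ℕ) : WithBot ℕ) ∧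
      W (2 * a) (Polynomial.X ^ (2 * b + 1) + p) ∈
        LieSubalgebra.lieSpan ℂ (Module.End ℂ (LaurentPolynomial ℂ))
          {W 1 1, W 0 (Polynomial.X ^ 3),
            W 2 Polynomial.X + W 2 1, W (-2) Polynomial.X - W (-2) 1} := by
  obtain ⟨f, hfm, hfd, hfS⟩ := WStmt13.good_main hW a b
  refine ⟨f - Polynomial.X ^ (2 * b + 1), ?_, ?_⟩
  · have hdf : f.degree = ((2 * b + 1 : ℕ) : WithBot ℕ) := by
      rw [Polynomial.degree_eq_natDegree hfm.ne_zero, hfd]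
    have := Polynomial.degree_sub_lt (p := f) (q := Polynomial.X ^ (2 * b + 1))
      (by rw [hdf, Polynomial.degree_X_pow]) hfm.ne_zero
      (by rw [Polynomial.leadingCoeff_X_pow]; exact hfm)
    rwa [hdf] at this
  · rw [show Polynomial.X ^ (2 * b + 1) + (f - Polynomial.X ^ (2 * b + 1)) = f by ring]
    exact hfS
end
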